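/- Let (Ω, ℙ) be a probability space and X₁,…,X_m : Ω → ℝ (m ≥ 1) random variables such that for each l the moments E[Xₗ] = μₗ, E[(Xₗ − μₗ)²] = σₗ² with σₗ > 0, and E[((Xₗ − μₗ)/σₗ)³] = λₗ exist (with Xₗ³ integrable). Let Z(x) = Σ_{l=1}^{m} gₗ(xₗ) be a separable function where each gₗ is a real polynomial of degree at most 3. Then the two-point estimate of the mean, Σ_{l=1}^{m} Σ_{k=1}^{2} w_{l,k} · Z(μ₁, …, μ_{l−1}, P_{l,k}, μ_{l+1}, …, μ_m), equals the exact expectation E[Z(X₁,…,X_m)] = Σₗ E[gₗ(Xₗ)]. -/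

import Mathlib

open MeasureTheory Polynomial

lemma tpe_moments (a s mr w0 w1 x0 x1 : ℝ) (hs : s ≠ 0) (hm : mr ≠ 0)
    (hs2 : s ^ 2 = mr + a ^ 2) (hx0 : x0 = a + s) (hx1 : x1 = a - s)
    (hw0 : w0 = -(1 / mr) * x1 / (x0 - x1)) (hw1 : w1 = (1 / mr) * x0 / (x0 - x1)) :
    w0 + w1 = 1 / mr ∧ w0 * x0 + w1 * x1 = 0 ∧ w0 * x0 ^ 2 + w1 * x1 ^ 2 = 1 ∧
      w0 * x0 ^ 3 + w1 * x1 ^ 3 = 2 * a := by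
  subst hx0 hx1 hw0 hw1
  have h2 : (a + s) - (a - s) = 2 * s := by ring
  rw [h2]
  refine ⟨by field_simp; ring, by field_simp; ring, ?_, ?_⟩
  · field_simp
    linear_combination (2 * s) * hs2
  · field_simp
    linear_combination (4 * a * s) * hs2

/-- Hong's two-point estimate of the mean of a separable function
`Z(x) = Σₗ gₗ(xₗ)`, where each `gₗ` is a real polynomial of degree at most 3,
equals the exact expectation `E[Z(X₁,…,X_m)] = Σₗ E[gₗ(Xₗ)]`, provided the first
three moments of each `Xₗ` exist and match the scheme's parameters. -/
theorem tpe_mean_exact_for_separable_cubic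
    {Ω : Type*} [MeasurableSpace Ω] (P : Measure Ω) [IsProbabilityMeasure P]
    (m : ℕ) (hm : 1 ≤ m) (X : Fin m → Ω → ℝ) (μ σ lam : Fin m → ℝ)
    (hint : ∀ l, Integrable (X l) P)
    (hint2 : ∀ l, Integrable (fun ω => (X l ω) ^ 2) P)
    (hint3 : ∀ l, Integrable (fun ω => (X l ω) ^ 3) P)
    (hmean : ∀ l, ∫ ω, X l ω ∂P = μ l)
    (hσ : ∀ l, 0 < σ l)
    (hvar : ∀ l, ∫ ω, (X l ω - μ l) ^ 2 ∂P = (σ l) ^ 2)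
    (hskew : ∀ l, ∫ ω, ((X l ω - μ l) / σ l) ^ 3 ∂P = lam l)
    (ξ w Pt : Fin m → Fin 2 → ℝ)
    (hξ₁ : ∀ l, ξ l 0 = lam l / 2 + Real.sqrt ((m : ℝ) + (lam l / 2) ^ 2))
    (hξ₂ : ∀ l, ξ l 1 = lam l / 2 - Real.sqrt ((m : ℝ) + (lam l / 2) ^ 2))
    (hw₁ : ∀ l, w l 0 = -(1 / (m : ℝ)) * ξ l 1 / (ξ l 0 - ξ l 1))
    (hw₂ : ∀ l, w l 1 = (1 / (m : ℝ)) * ξ l 0 / (ξ l 0 - ξ l 1))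
    (hPt : ∀ l k, Pt l k = μ l + ξ l k * σ l)
    (g : Fin m → Polynomial ℝ) (hdeg : ∀ l, (g l).natDegree ≤ 3)
    (Z : (Fin m → ℝ) → ℝ)
    (hZ : ∀ x, Z x = ∑ l, (g l).eval (x l)) :
    (∑ l, ∑ k, w l k * Z (Function.update μ l (Pt l k))) =
        ∫ ω, Z (fun l => X l ω) ∂P ∧
      (∫ ω, Z (fun l => X l ω) ∂P) = ∑ l, ∫ ω, (g l).eval (X l ω) ∂P := by
  have hmR : (0 : ℝ) < (m : ℝ) := by exact_mod_cast Nat.lt_of_lt_of_le Nat.zero_lt_one hm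
  have hm0 : (m : ℝ) ≠ 0 := ne_of_gt hmR
  have cubic_eval : ∀ l (x : ℝ), (g l).eval x =
      (g l).coeff 0 + (g l).coeff 1 * x + (g l).coeff 2 * x ^ 2 + (g l).coeff 3 * x ^ 3 := by
    intro l x
    rw [Polynomial.eval_eq_sum_range' (Nat.lt_succ_of_le (hdeg l))]
    simp [Finset.sum_range_succ]
  -- integrability of g l ∘ X l
  have hgint : ∀ l, Integrable (fun ω => (g l).eval (X l ω)) P := by
    intro l
    simp only [cubic_eval l]
    exact (((integrable_const _).add ((hint l).const_mul _)).add
      ((hint2 l).const_mul _)).add ((hint3 l).const_mul _)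
  -- second moment
  have I2 : ∀ l, ∫ ω, (X l ω) ^ 2 ∂P = σ l ^ 2 + μ l ^ 2 := by
    intro l
    have hv := hvar l
    have hsub : Integrable (fun ω => (X l ω) ^ 2 - (2 * μ l) * X l ω) P :=
      (hint2 l).sub ((hint l).const_mul _)
    have e2 : (fun ω => (X l ω - μ l) ^ 2) =
        fun ω => ((X l ω) ^ 2 - (2 * μ l) * X l ω) + (μ l) ^ 2 := by
      funext ω; ring
    rw [e2, integral_add hsub (integrable_const _),
      integral_sub (hint2 l) ((hint l).const_mul _), integral_const_mul, hmean,
      integral_const, probReal_univ] at hv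
    simp at hv
    linarith
  have I3 : ∀ l, ∫ ω, (X l ω) ^ 3 ∂P = lam l * σ l ^ 3 + 3 * μ l * σ l ^ 2 + μ l ^ 3 := by
    intro l
    have hσ0 : σ l ≠ 0 := ne_of_gt (hσ l)
    have hv := hskew l
    have hs1 : Integrable (fun ω => (X l ω) ^ 3 - (3 * μ l) * (X l ω) ^ 2) P :=
      (hint3 l).sub ((hint2 l).const_mul _)
    have hs2 : Integrable (fun ω => ((X l ω) ^ 3 - (3 * μ l) * (X l ω) ^ 2) +
        (3 * μ l ^ 2) * X l ω) P := hs1.add ((hint l).const_mul _)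
    have e3 : (fun ω => ((X l ω - μ l) / σ l) ^ 3) =
        fun ω => (1 / σ l ^ 3) * ((((X l ω) ^ 3 - (3 * μ l) * (X l ω) ^ 2) +
          (3 * μ l ^ 2) * X l ω) + (-(μ l ^ 3))) := by
      funext ω; field_simp; ring
    rw [e3, integral_const_mul,
      integral_add hs2 (integrable_const _),
      integral_add hs1 ((hint l).const_mul _),
      integral_sub (hint3 l) ((hint2 l).const_mul _), integral_const_mul,
      integral_const_mul, hmean, I2 l, integral_const, probReal_univ] at hv
    simp at hv
    have h3 : σ l ^ 3 ≠ 0 := pow_ne_zero _ hσ0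
    field_simp at hv
    linarith
  -- exact expectation per component
  have intkey : ∀ l, ∫ ω, (g l).eval (X l ω) ∂P =
      (g l).eval (μ l) + (g l).coeff 2 * σ l ^ 2 +
        (g l).coeff 3 * (3 * μ l * σ l ^ 2 + lam l * σ l ^ 3) := by
    intro l
    have ha1 : Integrable (fun ω => (g l).coeff 0 + (g l).coeff 1 * X l ω) P :=
      (integrable_const _).add ((hint l).const_mul _)
    have ha2 : Integrable (fun ω => ((g l).coeff 0 + (g l).coeff 1 * X l ω) +
        (g l).coeff 2 * (X l ω) ^ 2) P := ha1.add ((hint2 l).const_mul _)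
    simp only [cubic_eval l]
    rw [integral_add ha2 ((hint3 l).const_mul _),
      integral_add ha1 ((hint2 l).const_mul _),
      integral_add (integrable_const _) ((hint l).const_mul _),
      integral_const_mul, integral_const_mul, integral_const_mul, hmean, I2 l, I3 l,
      integral_const, probReal_univ]
    simp
    ring
  -- second conjunct
  have second : (∫ ω, Z (fun l => X l ω) ∂P) = ∑ l, ∫ ω, (g l).eval (X l ω) ∂P := by
    simp only [hZ]
    exact integral_finset_sum _ (fun l _ => hgint l)
  refine ⟨?_, second⟩
  rw [second]
  -- moments of the discrete two-point distribution
  have moeach : ∀ l, w l 0 + w l 1 = 1 / (m : ℝ) ∧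
      w l 0 * ξ l 0 + w l 1 * ξ l 1 = 0 ∧
      w l 0 * ξ l 0 ^ 2 + w l 1 * ξ l 1 ^ 2 = 1 ∧
      w l 0 * ξ l 0 ^ 3 + w l 1 * ξ l 1 ^ 3 = 2 * (lam l / 2) := by
    intro l
    have hpos : (0 : ℝ) < (m : ℝ) + (lam l / 2) ^ 2 := by positivity
    have hs : Real.sqrt ((m : ℝ) + (lam l / 2) ^ 2) ≠ 0 :=
      ne_of_gt (Real.sqrt_pos.mpr hpos)
    have hs2 : Real.sqrt ((m : ℝ) + (lam l / 2) ^ 2) ^ 2 = (m : ℝ) + (lam l / 2) ^ 2 :=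
      Real.sq_sqrt (le_of_lt hpos)
    exact tpe_moments (lam l / 2) _ (m : ℝ) _ _ _ _ hs hm0 hs2 (hξ₁ l) (hξ₂ l) (hw₁ l) (hw₂ l)
  -- TPE key per component
  have tpekey : ∀ l, (∑ k, w l k * (g l).eval (Pt l k)) =
      (1 / (m : ℝ)) * (g l).eval (μ l) + (g l).coeff 2 * σ l ^ 2 +
        (g l).coeff 3 * (3 * μ l * σ l ^ 2 + lam l * σ l ^ 3) := by
    intro l
    obtain ⟨M0, M1, M2, M3⟩ := moeach l
    rw [Fin.sum_univ_two, hPt l 0, hPt l 1, cubic_eval l, cubic_eval l, cubic_eval l]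
    linear_combination
      ((g l).coeff 0 + (g l).coeff 1 * μ l + (g l).coeff 2 * μ l ^ 2 +
        (g l).coeff 3 * μ l ^ 3) * M0 +
      (σ l * ((g l).coeff 1 + 2 * (g l).coeff 2 * μ l + 3 * (g l).coeff 3 * μ l ^ 2)) * M1 +
      (σ l ^ 2 * ((g l).coeff 2 + 3 * (g l).coeff 3 * μ l)) * M2 +
      ((g l).coeff 3 * σ l ^ 3) * M3
  -- Z at update points
  have hZupd : ∀ l k, Z (Function.update μ l (Pt l k)) =
      (g l).eval (Pt l k) + ((∑ j, (g j).eval (μ j)) - (g l).eval (μ l)) := by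
    intro l k
    rw [hZ]
    have h1 : ∀ j : Fin m, (g j).eval (Function.update μ l (Pt l k) j) =
        Function.update (fun j => (g j).eval (μ j)) l ((g l).eval (Pt l k)) j := by
      intro j
      rcases eq_or_ne j l with rfl | h
      · simp
      · simp [Function.update_of_ne h]
    rw [Finset.sum_congr rfl (fun j _ => h1 j),
      Finset.sum_update_of_mem (Finset.mem_univ l)]
    have h2 := Finset.sum_eq_sum_sdiff_singleton_add (Finset.mem_univ l)
      (fun j => (g j).eval (μ j))
    linarith [h2]
  -- put it together
  calc (∑ l, ∑ k, w l k * Z (Function.update μ l (Pt l k)))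
      = ∑ l, ((∑ k, w l k * (g l).eval (Pt l k)) +
          (w l 0 + w l 1) * ((∑ j, (g j).eval (μ j)) - (g l).eval (μ l))) := by
        refine Finset.sum_congr rfl (fun l _ => ?_)
        simp only [hZupd l, Fin.sum_univ_two]
        ring
    _ = ∑ l, ((g l).coeff 2 * σ l ^ 2 +
          (g l).coeff 3 * (3 * μ l * σ l ^ 2 + lam l * σ l ^ 3) +
          (1 / (m : ℝ)) * (∑ j, (g j).eval (μ j))) := by
        refine Finset.sum_congr rfl (fun l _ => ?_)
        rw [tpekey l, (moeach l).1]
        ring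
    _ = ∑ l, ∫ ω, (g l).eval (X l ω) ∂P := by
        rw [Finset.sum_congr rfl (fun l _ => intkey l)]
        simp only [Finset.sum_add_distrib, Finset.sum_const, Finset.card_univ,
          Fintype.card_fin, nsmul_eq_mul]
        field_simp
        ring
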